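/- arXiv:2007.01858 — 7 statements merged into one kernel-verified Lean document; each statement's English description precedes it below -/
import Mathlib

section
/- For every continuous linear functional φ ∈ B* there exists a unique function g : Ω' → E such that φ(Ψ(conj(λ))e) = ⟨e, g(λ)⟩ for all e ∈ E and λ ∈ Ω', and this function g is holomorphic on Ω'. Moreover, if the linear span of {Ψ(conj(λ))e : e ∈ E, λ ∈ Ω'} is dense in B, then the assignment φ ↦ g is injective, i.e. g = 0 implies φ = 0. -/
/- STATEMENT 0: For every continuous linear functional φ ∈ B* there exists a unique
function g : Ω' → E such that φ(Ψ(conj(λ))e) = ⟨e, g(λ)⟩ for all e ∈ E and λ ∈ Ω',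
and this function g is holomorphic on Ω'.  Moreover, if the linear span of
{Ψ(conj(λ))e : e ∈ E, λ ∈ Ω'} is dense in B, then g = 0 implies φ = 0.
(The paper's inner product ⟨·,·⟩ is linear in the first variable, so
⟨e, g λ⟩ = `inner (g λ) e` in Mathlib's convention.) -/
theorem stmt_0 {E : Type*} [NormedAddCommGroup E] [InnerProductSpace ℂ E] [CompleteSpace E]
    {B : Type*} [NormedAddCommGroup B] [NormedSpace ℂ B] [CompleteSpace B]
    (Ω' : Set ℂ) (hΩ' : IsOpen Ω') (hΩ'ne : Ω'.Nonempty)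
    (Ψ : ℂ → (E →L[ℂ] B))
    (hΨ : DifferentiableOn ℂ Ψ ((starRingEnd ℂ) '' Ω'))
    (φ : B →L[ℂ] ℂ) :
    ∃ g : ℂ → E,
      (∀ (e : E), ∀ lam ∈ Ω', φ (Ψ (starRingEnd ℂ lam) e) = (inner ℂ (g lam) e : ℂ)) ∧
      DifferentiableOn ℂ g Ω' ∧
      (∀ g' : ℂ → E,
        (∀ (e : E), ∀ lam ∈ Ω', φ (Ψ (starRingEnd ℂ lam) e) = (inner ℂ (g' lam) e : ℂ)) →
        Set.EqOn g' g Ω') ∧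
      ((Dense (↑(Submodule.span ℂ
            {b : B | ∃ (e : E), ∃ lam ∈ Ω', b = Ψ (starRingEnd ℂ lam) e}) : Set B)) →
        Set.EqOn g 0 Ω' → φ = 0) := by
  set R := (InnerProductSpace.toDual ℂ E).symm with hR
  set u : ℂ → (E →L[ℂ] ℂ) := fun μ => φ.comp (Ψ μ) with hu
  set g : ℂ → E := fun lam => R (u (starRingEnd ℂ lam)) with hg
  have hgspec : ∀ (e : E) (lam : ℂ), φ (Ψ (starRingEnd ℂ lam) e) = (inner ℂ (g lam) e : ℂ) := by
    intro e lam
    have : (inner ℂ (g lam) e : ℂ) = (InnerProductSpace.toDual ℂ E) (g lam) e := by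
      simp [InnerProductSpace.toDual_apply_apply]
    rw [this, hg]
    simp [hR, hu]
  have hopen : IsOpen ((starRingEnd ℂ) '' Ω') := by
    have : (starRingEnd ℂ) '' Ω' = (starRingEnd ℂ) ⁻¹' Ω' := by
      ext z
      constructor
      · rintro ⟨w, hw, rfl⟩; simpa using hw
      · intro hz; exact ⟨starRingEnd ℂ z, hz, by simp⟩
    rw [this]
    exact hΩ'.preimage Complex.continuous_conj
  have hdiff : DifferentiableOn ℂ g Ω' := by
    intro z0 hz0
    have hc0 : starRingEnd ℂ z0 ∈ (starRingEnd ℂ) '' Ω' := ⟨z0, hz0, rfl⟩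
    have hΨat : DifferentiableAt ℂ Ψ (starRingEnd ℂ z0) :=
      hΨ.differentiableAt (hopen.mem_nhds hc0)
    have huat : DifferentiableAt ℂ u (starRingEnd ℂ z0) :=
      (differentiableAt_const φ).clm_comp hΨat
    obtain ⟨u', hu'⟩ : ∃ u', HasDerivAt u u' (starRingEnd ℂ z0) :=
      ⟨_, huat.hasDerivAt⟩
    have key : HasDerivAt g (R u') z0 := by
      rw [hasDerivAt_iff_isLittleO] at hu' ⊢
      have tconj : Filter.Tendsto (starRingEnd ℂ) (nhds z0) (nhds (starRingEnd ℂ z0)) :=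
        Complex.continuous_conj.tendsto z0
      have h1 := hu'.comp_tendsto tconj
      rw [Asymptotics.isLittleO_iff] at h1 ⊢
      intro c hc
      filter_upwards [h1 hc] with lam hlam
      have e1 : g lam - g z0 - (lam - z0) • R u'
          = R (u (starRingEnd ℂ lam) - u (starRingEnd ℂ z0)
              - (starRingEnd ℂ lam - starRingEnd ℂ z0) • u') := by
        simp only [hg, map_sub, LinearIsometryEquiv.map_smulₛₗ]
        congr 1
        simp
      have e2 : ‖lam - z0‖ = ‖starRingEnd ℂ lam - starRingEnd ℂ z0‖ := by
        rw [← map_sub]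
        exact (RCLike.norm_conj _).symm
      rw [e1, LinearIsometryEquiv.norm_map, e2]
      simpa using hlam
    exact (key.differentiableAt).differentiableWithinAt
  refine ⟨g, fun e lam _ => hgspec e lam, hdiff, ?_, ?_⟩
  · intro g' hg' lam hlam
    apply ext_inner_right ℂ
    intro e
    rw [← hg' e lam hlam, hgspec e lam]
  · intro hdense hzero
    have hspan : ∀ b ∈ Submodule.span ℂ
        {b : B | ∃ (e : E), ∃ lam ∈ Ω', b = Ψ (starRingEnd ℂ lam) e}, φ b = 0 := by
      intro b hb
      induction hb using Submodule.span_induction with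
      | mem x hx =>
        obtain ⟨e, lam, hlam, rfl⟩ := hx
        rw [hgspec e lam, hzero hlam]
        simp
      | zero => simp
      | add x y _ _ hx hy => simp [hx, hy]
      | smul c x _ hx => simp [hx]
    have heq : (φ : B → ℂ) = (0 : B →L[ℂ] ℂ) := by
      apply Continuous.ext_on hdense φ.continuous (map_continuous 0)
      intro b hb
      simpa using hspan b hb
    ext b
    exact congrFun heq b
end

section
/- Assume Mz ∈ B(B) acts as multiplication by the variable, i.e. (ι(Mz f))(z) = z·(ι f)(z) for all f ∈ B and z ∈ Ω. Then for all e ∈ E, z ∈ Ω and λ ∈ Ω': (U(Mz*φ_{z,e}))(λ) = conj(z)·(Uφ_{z,e})(λ), where Mz* ∈ B(B*) is the Banach-space adjoint of Mz; that is, the left inverse induced by Mz* on the Cauchy dual space satisfies condition (A3) with respect to the dual kernel function Ψ'(conj(z))e := Uφ_{z,e}. -/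
/- STATEMENT 7: Assume Mz acts as multiplication by the variable:
(ι(Mz f))(z) = z·(ι f)(z) on Ω.  Then for all e ∈ E, z ∈ Ω, λ ∈ Ω':
(U(Mz*φ_{z,e}))(λ) = conj(z)·(Uφ_{z,e})(λ), where Mz*φ = φ ∘ Mz is the Banach-space
adjoint; i.e. the dual kernel Ψ'(conj z)e := Uφ_{z,e} satisfies (A3) for the left
inverse induced by Mz* on the Cauchy dual space.
φ_{z,e} is pinned down by Φ z e f = ⟨(ι f)(z), e⟩ = inner e (ι f z); U is pinned down
by φ(Ψ(conj λ)e) = ⟨e, (Uφ)(λ)⟩ = inner (U φ lam) e. -/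
theorem stmt_7 {E : Type*} [NormedAddCommGroup E] [InnerProductSpace ℂ E] [CompleteSpace E]
    {B : Type*} [NormedAddCommGroup B] [NormedSpace ℂ B] [CompleteSpace B]
    (Ω Ω' : Set ℂ) (hΩ : IsOpen Ω) (hΩne : Ω.Nonempty)
    (hΩ' : IsOpen Ω') (hΩ'ne : Ω'.Nonempty)
    (ι : B →ₗ[ℂ] (ℂ → E))
    (hinj : ∀ f : B, (∀ z ∈ Ω, ι f z = 0) → f = 0)
    (hhol : ∀ f : B, DifferentiableOn ℂ (ι f) Ω)
    (hA1 : ∀ K ⊆ Ω, IsCompact K → ∃ C > 0, ∀ (f : B), ∀ z ∈ K, ‖ι f z‖ ≤ C * ‖f‖)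
    (Ψ : ℂ → (E →L[ℂ] B))
    (hΨ : DifferentiableOn ℂ Ψ ((starRingEnd ℂ) '' Ω'))
    (Φ : ℂ → E → (B →L[ℂ] ℂ))
    (hΦ : ∀ z ∈ Ω, ∀ (e : E) (f : B), Φ z e f = (inner ℂ e (ι f z) : ℂ))
    (U : (B →L[ℂ] ℂ) → ℂ → E)
    (hU : ∀ (φ : B →L[ℂ] ℂ) (e : E), ∀ lam ∈ Ω',
        φ (Ψ (starRingEnd ℂ lam) e) = (inner ℂ (U φ lam) e : ℂ))
    (Mz : B →L[ℂ] B)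
    (hMz : ∀ (f : B), ∀ z ∈ Ω, ι (Mz f) z = z • ι f z) :
    ∀ (e : E), ∀ z ∈ Ω, ∀ lam ∈ Ω',
      U ((Φ z e).comp Mz) lam = (starRingEnd ℂ z) • U (Φ z e) lam := by
  intro e z hz lam hlam
  apply ext_inner_right ℂ
  intro e'
  rw [← hU _ e' lam hlam, inner_smul_left, ← hU _ e' lam hlam]
  simp only [ContinuousLinearMap.comp_apply, RingHom.id_apply, starRingEnd_self_apply]
  rw [hΦ z hz e, hΦ z hz e, hMz _ z hz, inner_smul_right]
end

section
/- Let 0 ≤ a < b and suppose that for every x ∈ H and every λ ∈ A(a,b) the series F_x(λ) := Σ_{n≥1}(P_E Tⁿ x)λ^{-n} + Σ_{n≥0}(P_E T'*ⁿ x)λⁿ converges in E. Then for every compact set K ⊆ A(a,b) there exists a constant C_K > 0 such that ‖F_x(λ)‖_E ≤ C_K‖x‖ for all x ∈ H and all λ ∈ K. -/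
open ContinuousLinearMap

/-- Orthogonal projection onto the closed subspace `E`, as an operator `H →L[ℂ] H`. -/
noncomputable def PE {H : Type*} [NormedAddCommGroup H] [InnerProductSpace ℂ H]
    (E : Submodule ℂ H) [CompleteSpace E] : H →L[ℂ] H :=
  E.subtypeL.comp E.orthogonalProjectionOnto

/-- The open annulus A(a,b) = {z ∈ ℂ : a < |z| < b}. -/
def annulus (a b : ℝ) : Set ℂ := {z : ℂ | a < ‖z‖ ∧ ‖z‖ < b}

/- STATEMENT 9: If for every x ∈ H and λ ∈ A(a,b) the series
F_x(λ) = Σ_{n≥1}(P_E Tⁿ x)λ^{-n} + Σ_{n≥0}(P_E T'*ⁿ x)λⁿ converges in E, then for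
every compact K ⊆ A(a,b) there is C_K > 0 with ‖F_x(λ)‖ ≤ C_K‖x‖ for all x and λ ∈ K. -/
theorem stmt_9 {H : Type*} [NormedAddCommGroup H] [InnerProductSpace ℂ H] [CompleteSpace H]
    (T T' W : H →L[ℂ] H)
    (hleft : ∃ S : H →L[ℂ] H, S.comp T = ContinuousLinearMap.id ℂ H)
    (hW1 : W.comp ((ContinuousLinearMap.adjoint T).comp T) = ContinuousLinearMap.id ℂ H)
    (hW2 : ((ContinuousLinearMap.adjoint T).comp T).comp W = ContinuousLinearMap.id ℂ H)
    (hT' : T' = T.comp W)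
    (E : Submodule ℂ H) [CompleteSpace E]
    (a b : ℝ) (ha : 0 ≤ a) (hab : a < b)
    (hconv : ∀ x : H, ∀ lam ∈ annulus a b,
      Summable (fun n : ℕ => (lam ^ (-(n + 1 : ℤ))) • PE E ((T ^ (n + 1)) x)) ∧
      Summable (fun n : ℕ =>
        (lam ^ n) • PE E (((ContinuousLinearMap.adjoint T') ^ n) x))) :
    ∀ K ⊆ annulus a b, IsCompact K → ∃ C > 0, ∀ (x : H), ∀ lam ∈ K,
      ‖(∑' n : ℕ, (lam ^ (-(n + 1 : ℤ))) • PE E ((T ^ (n + 1)) x)) +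
        ∑' n : ℕ, (lam ^ n) • PE E (((ContinuousLinearMap.adjoint T') ^ n) x)‖
        ≤ C * ‖x‖ := by
  intro K hK hKc
  rcases K.eq_empty_or_nonempty with rfl | hKne
  · exact ⟨1, one_pos, fun x lam h => absurd h (Set.notMem_empty _)⟩
  obtain ⟨zmin, hzminK, hmin⟩ := hKc.exists_isMinOn hKne continuous_norm.continuousOn
  obtain ⟨zmax, hzmaxK, hmax⟩ := hKc.exists_isMaxOn hKne continuous_norm.continuousOn
  set r : ℝ := ‖zmin‖ with hr
  set R : ℝ := ‖zmax‖ with hRdef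
  have har : a < r := (hK hzminK).1
  have haR : a < R := (hK hzmaxK).1
  have hRb : R < b := (hK hzmaxK).2
  have hr0 : 0 < r := lt_of_le_of_lt ha har
  have hR0 : 0 < R := lt_of_le_of_lt ha haR
  obtain ⟨m1, hm10, hm1a, hm1r⟩ : ∃ m1 : ℝ, 0 < m1 ∧ a < m1 ∧ m1 < r :=
    ⟨(a + r) / 2, by linarith, by linarith, by linarith⟩
  obtain ⟨m2, hm20, hm2R, hm2b⟩ : ∃ m2 : ℝ, 0 < m2 ∧ R < m2 ∧ m2 < b :=
    ⟨(R + b) / 2, by linarith, by linarith, by linarith⟩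
  have hrb : r < b := (hK hzminK).2
  have hm1b : m1 < b := lt_trans hm1r hrb
  have hn1 : ‖(m1 : ℂ)‖ = m1 := by
    rw [Complex.norm_real, Real.norm_of_nonneg hm10.le]
  have hn2 : ‖(m2 : ℂ)‖ = m2 := by
    rw [Complex.norm_real, Real.norm_of_nonneg hm20.le]
  have hμ1 : (m1 : ℂ) ∈ annulus a b := ⟨by rw [hn1]; exact hm1a, by rw [hn1]; exact hm1b⟩
  have hμ2 : (m2 : ℂ) ∈ annulus a b := ⟨by rw [hn2]; exact lt_trans haR hm2R,
    by rw [hn2]; exact hm2b⟩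
  -- Banach–Steinhaus at μ1 for the negative-power part
  set g1 : ℕ → H →L[ℂ] H :=
    fun n => ((m1 : ℂ) ^ (-(n + 1 : ℤ))) • ((PE E).comp (T ^ (n + 1))) with hg1
  have hbd1 : ∀ x : H, ∃ C, ∀ n, ‖g1 n x‖ ≤ C := by
    intro x
    obtain ⟨C, hC⟩ := ((hconv x (m1 : ℂ) hμ1).1.tendsto_atTop_zero.norm).bddAbove_range
    exact ⟨C, fun n => hC (Set.mem_range_self n)⟩
  obtain ⟨C1, hC1⟩ := banach_steinhaus hbd1
  -- Banach–Steinhaus at μ2 for the positive-power part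
  set g2 : ℕ → H →L[ℂ] H :=
    fun n => ((m2 : ℂ) ^ n) • ((PE E).comp ((ContinuousLinearMap.adjoint T') ^ n)) with hg2
  have hbd2 : ∀ x : H, ∃ C, ∀ n, ‖g2 n x‖ ≤ C := by
    intro x
    obtain ⟨C, hC⟩ := ((hconv x (m2 : ℂ) hμ2).2.tendsto_atTop_zero.norm).bddAbove_range
    exact ⟨C, fun n => hC (Set.mem_range_self n)⟩
  obtain ⟨C2, hC2⟩ := banach_steinhaus hbd2
  set C1' : ℝ := max C1 0 with hC1'def
  set C2' : ℝ := max C2 0 with hC2'def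
  have hC1'0 : 0 ≤ C1' := le_max_right _ _
  have hC2'0 : 0 ≤ C2' := le_max_right _ _
  set q1 : ℝ := m1 / r with hq1def
  set q2 : ℝ := R / m2 with hq2def
  have hq10 : 0 ≤ q1 := div_nonneg hm10.le hr0.le
  have hq11 : q1 < 1 := (div_lt_one hr0).2 hm1r
  have hq20 : 0 ≤ q2 := div_nonneg hR0.le hm20.le
  have hq21 : q2 < 1 := (div_lt_one hm20).2 hm2R
  set D1 : ℝ := C1' * q1 * (1 - q1)⁻¹ with hD1def
  set D2 : ℝ := C2' * (1 - q2)⁻¹ with hD2def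
  have hD10 : 0 ≤ D1 := by
    apply mul_nonneg (mul_nonneg hC1'0 hq10)
    exact inv_nonneg.2 (by linarith)
  have hD20 : 0 ≤ D2 := by
    apply mul_nonneg hC2'0
    exact inv_nonneg.2 (by linarith)
  refine ⟨D1 + D2 + 1, by linarith, ?_⟩
  intro x lam hlam
  have hlr : r ≤ ‖lam‖ := hmin hlam
  have hlR : ‖lam‖ ≤ R := hmax hlam
  have hl0 : 0 < ‖lam‖ := lt_of_lt_of_le hr0 hlr
  -- bound on PE E ((T^(n+1)) x)
  have hPE1 : ∀ n : ℕ, ‖PE E ((T ^ (n + 1)) x)‖ ≤ m1 ^ (n + 1) * (C1' * ‖x‖) := by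
    intro n
    have hg1n : ‖g1 n x‖ ≤ C1' * ‖x‖ :=
      le_trans ((g1 n).le_opNorm x)
        (mul_le_mul_of_nonneg_right (le_trans (hC1 n) (le_max_left _ _)) (norm_nonneg x))
    have heq : ‖g1 n x‖ = (m1 ^ (n + 1))⁻¹ * ‖PE E ((T ^ (n + 1)) x)‖ := by
      simp only [hg1, ContinuousLinearMap.smul_apply, ContinuousLinearMap.comp_apply,
        norm_smul, norm_zpow, hn1]
      rw [zpow_neg]
      norm_cast
    rw [heq] at hg1n
    have := mul_le_mul_of_nonneg_left hg1n (le_of_lt (pow_pos hm10 (n + 1)))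
    rw [← mul_assoc, mul_inv_cancel₀ (ne_of_gt (pow_pos hm10 (n + 1))), one_mul] at this
    exact this
  have hPE2 : ∀ n : ℕ,
      ‖PE E (((ContinuousLinearMap.adjoint T') ^ n) x)‖ ≤ (m2 ^ n)⁻¹ * (C2' * ‖x‖) := by
    intro n
    have hg2n : ‖g2 n x‖ ≤ C2' * ‖x‖ :=
      le_trans ((g2 n).le_opNorm x)
        (mul_le_mul_of_nonneg_right (le_trans (hC2 n) (le_max_left _ _)) (norm_nonneg x))
    have heq : ‖g2 n x‖ = m2 ^ n * ‖PE E (((ContinuousLinearMap.adjoint T') ^ n) x)‖ := by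
      simp only [hg2, ContinuousLinearMap.smul_apply, ContinuousLinearMap.comp_apply,
        norm_smul, norm_pow, hn2]
    rw [heq] at hg2n
    rw [inv_mul_eq_div, le_div_iff₀ (pow_pos hm20 n)]
    linarith [hg2n]
  -- term bounds
  have hb1 : ∀ n : ℕ, ‖(lam ^ (-(n + 1 : ℤ))) • PE E ((T ^ (n + 1)) x)‖
      ≤ (C1' * ‖x‖ * q1) * q1 ^ n := by
    intro n
    rw [norm_smul, norm_zpow]
    have hz : ‖lam‖ ^ (-(n + 1 : ℤ)) = (‖lam‖ ^ (n + 1))⁻¹ := by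
      rw [zpow_neg]; norm_cast
    rw [hz]
    have h1 : (‖lam‖ ^ (n + 1))⁻¹ ≤ (r ^ (n + 1))⁻¹ := by
      apply inv_anti₀ (pow_pos hr0 (n + 1))
      exact pow_le_pow_left₀ hr0.le hlr (n + 1)
    calc (‖lam‖ ^ (n + 1))⁻¹ * ‖PE E ((T ^ (n + 1)) x)‖
        ≤ (r ^ (n + 1))⁻¹ * (m1 ^ (n + 1) * (C1' * ‖x‖)) := by
          apply mul_le_mul h1 (hPE1 n) (norm_nonneg _)
          exact inv_nonneg.2 (pow_nonneg hr0.le _)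
      _ = (C1' * ‖x‖ * q1) * q1 ^ n := by
          rw [hq1def, div_eq_mul_inv, ← inv_pow]
          ring
  have hb2 : ∀ n : ℕ, ‖(lam ^ n) • PE E (((ContinuousLinearMap.adjoint T') ^ n) x)‖
      ≤ (C2' * ‖x‖) * q2 ^ n := by
    intro n
    rw [norm_smul, norm_pow]
    calc ‖lam‖ ^ n * ‖PE E (((ContinuousLinearMap.adjoint T') ^ n) x)‖
        ≤ R ^ n * ((m2 ^ n)⁻¹ * (C2' * ‖x‖)) := by
          apply mul_le_mul (pow_le_pow_left₀ hl0.le hlR n) (hPE2 n) (norm_nonneg _)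
          exact pow_nonneg hR0.le _
      _ = (C2' * ‖x‖) * q2 ^ n := by
          rw [hq2def, div_eq_mul_inv, ← inv_pow]
          ring
  -- geometric majorants
  have hgs1 : Summable (fun n : ℕ => (C1' * ‖x‖ * q1) * q1 ^ n) :=
    (summable_geometric_of_lt_one hq10 hq11).mul_left _
  have hgs2 : Summable (fun n : ℕ => (C2' * ‖x‖) * q2 ^ n) :=
    (summable_geometric_of_lt_one hq20 hq21).mul_left _
  have hns1 : Summable (fun n : ℕ => ‖(lam ^ (-(n + 1 : ℤ))) • PE E ((T ^ (n + 1)) x)‖) :=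
    Summable.of_nonneg_of_le (fun n => norm_nonneg _) hb1 hgs1
  have hns2 : Summable (fun n : ℕ =>
      ‖(lam ^ n) • PE E (((ContinuousLinearMap.adjoint T') ^ n) x)‖) :=
    Summable.of_nonneg_of_le (fun n => norm_nonneg _) hb2 hgs2
  have ht1 : ‖∑' n : ℕ, (lam ^ (-(n + 1 : ℤ))) • PE E ((T ^ (n + 1)) x)‖
      ≤ (C1' * ‖x‖ * q1) * (1 - q1)⁻¹ := by
    calc ‖∑' n : ℕ, (lam ^ (-(n + 1 : ℤ))) • PE E ((T ^ (n + 1)) x)‖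
        ≤ ∑' n : ℕ, ‖(lam ^ (-(n + 1 : ℤ))) • PE E ((T ^ (n + 1)) x)‖ :=
          norm_tsum_le_tsum_norm hns1
      _ ≤ ∑' n : ℕ, (C1' * ‖x‖ * q1) * q1 ^ n := Summable.tsum_le_tsum hb1 hns1 hgs1
      _ = (C1' * ‖x‖ * q1) * (1 - q1)⁻¹ := by
          rw [tsum_mul_left, tsum_geometric_of_lt_one hq10 hq11]
  have ht2 : ‖∑' n : ℕ, (lam ^ n) • PE E (((ContinuousLinearMap.adjoint T') ^ n) x)‖
      ≤ (C2' * ‖x‖) * (1 - q2)⁻¹ := by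
    calc ‖∑' n : ℕ, (lam ^ n) • PE E (((ContinuousLinearMap.adjoint T') ^ n) x)‖
        ≤ ∑' n : ℕ, ‖(lam ^ n) • PE E (((ContinuousLinearMap.adjoint T') ^ n) x)‖ :=
          norm_tsum_le_tsum_norm hns2
      _ ≤ ∑' n : ℕ, (C2' * ‖x‖) * q2 ^ n := Summable.tsum_le_tsum hb2 hns2 hgs2
      _ = (C2' * ‖x‖) * (1 - q2)⁻¹ := by
          rw [tsum_mul_left, tsum_geometric_of_lt_one hq20 hq21]
  calc ‖(∑' n : ℕ, (lam ^ (-(n + 1 : ℤ))) • PE E ((T ^ (n + 1)) x)) +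
        ∑' n : ℕ, (lam ^ n) • PE E (((ContinuousLinearMap.adjoint T') ^ n) x)‖
      ≤ ‖∑' n : ℕ, (lam ^ (-(n + 1 : ℤ))) • PE E ((T ^ (n + 1)) x)‖ +
        ‖∑' n : ℕ, (lam ^ n) • PE E (((ContinuousLinearMap.adjoint T') ^ n) x)‖ :=
        norm_add_le _ _
    _ ≤ (C1' * ‖x‖ * q1) * (1 - q1)⁻¹ + (C2' * ‖x‖) * (1 - q2)⁻¹ := add_le_add ht1 ht2
    _ = (D1 + D2) * ‖x‖ := by rw [hD1def, hD2def]; ring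
    _ ≤ (D1 + D2 + 1) * ‖x‖ := by
        apply mul_le_mul_of_nonneg_right _ (norm_nonneg x)
        linarith
end

section
/- Let λ ∈ ℂ∖{0} and let e ∈ H be such that the series y := Σ_{n≥1} λ^{-n} T'*ⁿ e + Σ_{n≥0} λⁿ Tⁿ e converges in H. Then T'* y = λ y, i.e. y is an eigenvector (when nonzero) of the adjoint of the Cauchy dual operator with eigenvalue λ. -/
open ContinuousLinearMap

/- STATEMENT 10: Let λ ≠ 0 and e ∈ H be such that
y := Σ_{n≥1} λ^{-n} T'*ⁿ e + Σ_{n≥0} λⁿ Tⁿ e converges in H.  Then T'* y = λ y. -/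
theorem stmt_10 {H : Type*} [NormedAddCommGroup H] [InnerProductSpace ℂ H] [CompleteSpace H]
    (T T' W : H →L[ℂ] H)
    (hleft : ∃ S : H →L[ℂ] H, S.comp T = ContinuousLinearMap.id ℂ H)
    (hW1 : W.comp ((ContinuousLinearMap.adjoint T).comp T) = ContinuousLinearMap.id ℂ H)
    (hW2 : ((ContinuousLinearMap.adjoint T).comp T).comp W = ContinuousLinearMap.id ℂ H)
    (hT' : T' = T.comp W)
    (lam : ℂ) (hlam : lam ≠ 0) (e : H)
    (h1 : Summable (fun n : ℕ =>
        (lam ^ (-(n + 1 : ℤ))) • ((ContinuousLinearMap.adjoint T') ^ (n + 1)) e))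
    (h2 : Summable (fun n : ℕ => (lam ^ n) • (T ^ n) e))
    (y : H)
    (hy : y = (∑' n : ℕ,
        (lam ^ (-(n + 1 : ℤ))) • ((ContinuousLinearMap.adjoint T') ^ (n + 1)) e) +
        ∑' n : ℕ, (lam ^ n) • (T ^ n) e) :
    (ContinuousLinearMap.adjoint T') y = lam • y := by
  set K := ContinuousLinearMap.adjoint T' with hK
  set A := (ContinuousLinearMap.adjoint T).comp T with hA
  have hAadj : ContinuousLinearMap.adjoint A = A := by
    rw [hA, ContinuousLinearMap.adjoint_comp, ContinuousLinearMap.adjoint_adjoint]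
  have h' : (ContinuousLinearMap.adjoint W).comp A = ContinuousLinearMap.id ℂ H := by
    have h := congrArg ContinuousLinearMap.adjoint hW2
    rwa [ContinuousLinearMap.adjoint_comp, hAadj, ContinuousLinearMap.adjoint_id] at h
  have hWadj : ContinuousLinearMap.adjoint W = W := by
    ext x
    have h1x := DFunLike.congr_fun h' (W x)
    have h2x := DFunLike.congr_fun hW2 x
    simp only [ContinuousLinearMap.comp_apply, ContinuousLinearMap.id_apply] at h1x h2x
    rw [h2x] at h1x
    exact h1x
  have hKT : ∀ x : H, K (T x) = x := by
    intro x
    have hKW : K = W.comp (ContinuousLinearMap.adjoint T) := by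
      rw [hK, hT', ContinuousLinearMap.adjoint_comp, hWadj]
    rw [hKW]
    have := DFunLike.congr_fun hW1 x
    simpa [hA] using this
  set a : ℕ → H := fun n => (lam ^ (-(n + 1 : ℤ))) • (K ^ (n + 1)) e with ha
  set b : ℕ → H := fun n => (lam ^ n) • (T ^ n) e with hb
  have hKa : ∀ n : ℕ, K (a n) = (lam ^ (-(n + 1 : ℤ))) • (K ^ (n + 2)) e := by
    intro n
    simp only [ha, map_smul]
    congr 1
    rw [pow_succ' K (n + 1), ContinuousLinearMap.mul_apply]
  have hca : ∀ n : ℕ, lam • a n = (lam ^ (-(n : ℤ))) • (K ^ (n + 1)) e := by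
    intro n
    simp only [ha, smul_smul]
    rw [← zpow_one_add₀ hlam]
    congr 1
    ring
  have hc : Summable (fun n : ℕ => (lam ^ (-(n : ℤ))) • (K ^ (n + 1)) e) := by
    have := h1.const_smul lam
    simpa [hca] using this
  have hsumKa : HasSum (fun n => K (a n)) (K (∑' n, a n)) := h1.hasSum.mapL K
  have hsumKb : HasSum (fun n => K (b n)) (K (∑' n, b n)) := (h2.hasSum.mapL K)
  have hAs : ∑' n, K (a n) = lam • (∑' n, a n) - K e := by
    have hc0 : ∑' n : ℕ, (lam ^ (-(n : ℤ))) • (K ^ (n + 1)) e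
        = K e + ∑' n, K (a n) := by
      rw [Summable.tsum_eq_zero_add hc]
      congr 1
      · simp
      · exact tsum_congr fun n => by rw [hKa n]; norm_num
    have hc1 : ∑' n : ℕ, (lam ^ (-(n : ℤ))) • (K ^ (n + 1)) e
        = lam • ∑' n, a n := by
      rw [← (h1.hasSum.const_smul lam).tsum_eq]
      exact tsum_congr fun n => (hca n).symm
    rw [← hc1, hc0]
    abel
  have hBs : ∑' n, K (b n) = K e + lam • (∑' n, b n) := by
    have hKb1 : ∀ n : ℕ, K (b (n + 1)) = lam • b n := by
      intro n
      simp only [hb, map_smul]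
      rw [pow_succ' T n, ContinuousLinearMap.mul_apply, hKT, smul_smul, ← pow_succ']
    rw [Summable.tsum_eq_zero_add hsumKb.summable]
    congr 1
    · simp [hb]
    · rw [← (h2.hasSum.const_smul lam).tsum_eq]
      exact tsum_congr fun n => hKb1 n
  rw [hy, map_add, ← hsumKa.tsum_eq, ← hsumKb.tsum_eq, hAs, hBs, smul_add]
  abel
end

section
/- Let λ ∈ ℂ∖{0} satisfy Σ_{n≥1}‖P_E T'ⁿ‖|λ|^{-n} + Σ_{n≥0}‖P_E T*ⁿ‖|λ|ⁿ < ∞. Then for every g ∈ H and every e ∈ E all the series below converge absolutely and ⟨Σ_{n≥1} conj(λ)^{-n} T'*ⁿ e + Σ_{n≥0} conj(λ)ⁿ Tⁿ e, g⟩ = ⟨e, Σ_{n≥1} (P_E T'ⁿ g)λ^{-n} + Σ_{n≥0} (P_E T*ⁿ g)λⁿ⟩. (This identifies the Cauchy dual of the analytic model space of T with the analytic model space of the Cauchy dual operator T'.) -/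
open ContinuousLinearMap

/- STATEMENT 12: Let λ ≠ 0 satisfy Σ_{n≥1}‖P_E T'ⁿ‖|λ|^{-n} + Σ_{n≥0}‖P_E T*ⁿ‖|λ|ⁿ < ∞.
Then for every g ∈ H and e ∈ E all the series below converge absolutely and
⟨Σ conj(λ)^{-n} T'*ⁿ e + Σ conj(λ)ⁿ Tⁿ e, g⟩ = ⟨e, Σ (P_E T'ⁿ g)λ^{-n} + Σ (P_E T*ⁿ g)λⁿ⟩.
The paper's pairing ⟨a,b⟩ (linear in a) is `inner b a` in Mathlib conventions. -/
theorem stmt_12 {H : Type*} [NormedAddCommGroup H] [InnerProductSpace ℂ H] [CompleteSpace H]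
    (T T' W : H →L[ℂ] H)
    (hleft : ∃ S : H →L[ℂ] H, S.comp T = ContinuousLinearMap.id ℂ H)
    (hW1 : W.comp ((ContinuousLinearMap.adjoint T).comp T) = ContinuousLinearMap.id ℂ H)
    (hW2 : ((ContinuousLinearMap.adjoint T).comp T).comp W = ContinuousLinearMap.id ℂ H)
    (hT' : T' = T.comp W)
    (E : Submodule ℂ H) [CompleteSpace E]
    (lam : ℂ) (hlam : lam ≠ 0)
    (h1 : Summable (fun n : ℕ => ‖(PE E).comp (T' ^ (n + 1))‖ * ‖lam‖⁻¹ ^ (n + 1)))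
    (h2 : Summable (fun n : ℕ =>
        ‖(PE E).comp ((ContinuousLinearMap.adjoint T) ^ n)‖ * ‖lam‖ ^ n))
    (g : H) (e : H) (he : e ∈ E) :
    Summable (fun n : ℕ =>
      ‖((starRingEnd ℂ lam) ^ (-(n + 1 : ℤ))) •
        ((ContinuousLinearMap.adjoint T') ^ (n + 1)) e‖) ∧
    Summable (fun n : ℕ => ‖((starRingEnd ℂ lam) ^ n) • (T ^ n) e‖) ∧
    Summable (fun n : ℕ => ‖(lam ^ (-(n + 1 : ℤ))) • PE E ((T' ^ (n + 1)) g)‖) ∧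
    Summable (fun n : ℕ =>
      ‖(lam ^ n) • PE E (((ContinuousLinearMap.adjoint T) ^ n) g)‖) ∧
    (inner ℂ g
      ((∑' n : ℕ, ((starRingEnd ℂ lam) ^ (-(n + 1 : ℤ))) •
          ((ContinuousLinearMap.adjoint T') ^ (n + 1)) e) +
        ∑' n : ℕ, ((starRingEnd ℂ lam) ^ n) • (T ^ n) e) : ℂ) =
    (inner ℂ
      ((∑' n : ℕ, (lam ^ (-(n + 1 : ℤ))) • PE E ((T' ^ (n + 1)) g)) +
        ∑' n : ℕ, (lam ^ n) • PE E (((ContinuousLinearMap.adjoint T) ^ n) g)) e : ℂ) := by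
  have hPEadj : ContinuousLinearMap.adjoint (PE E) = PE E :=
    ContinuousLinearMap.isSelfAdjoint_iff'.mp (isSelfAdjoint_starProjection E)
  have hPEe : PE E e = e := by
    simp [PE, Submodule.orthogonalProjectionOnto_mem_subspace_eq_self ⟨e, he⟩]
  -- rewrite the "vector" terms via adjoints of the composed operators
  have key1 : ∀ n : ℕ, ((ContinuousLinearMap.adjoint T') ^ (n + 1)) e
      = ContinuousLinearMap.adjoint ((PE E).comp (T' ^ (n + 1))) e := by
    intro n
    rw [ContinuousLinearMap.adjoint_comp, hPEadj]
    simp [← star_eq_adjoint, star_pow, hPEe]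
  have key2 : ∀ n : ℕ, (T ^ n) e
      = ContinuousLinearMap.adjoint ((PE E).comp ((ContinuousLinearMap.adjoint T) ^ n)) e := by
    intro n
    rw [ContinuousLinearMap.adjoint_comp, hPEadj]
    simp [← star_eq_adjoint, star_pow, hPEe]
  have hnormconj : ∀ (k : ℤ), ‖(starRingEnd ℂ lam) ^ k‖ = ‖lam‖ ^ k := by
    intro k
    rw [norm_zpow, RCLike.norm_conj]
  have hz : ∀ n : ℕ, ‖lam‖ ^ (-(n + 1 : ℤ)) = ‖lam‖⁻¹ ^ (n + 1) := by
    intro n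
    rw [zpow_neg, ← inv_zpow]
    norm_cast
  -- Summability 1
  have S1 : Summable (fun n : ℕ =>
      ‖((starRingEnd ℂ lam) ^ (-(n + 1 : ℤ))) •
        ((ContinuousLinearMap.adjoint T') ^ (n + 1)) e‖) := by
    apply Summable.of_nonneg_of_le (fun n => norm_nonneg _) _ (h1.mul_right ‖e‖)
    intro n
    rw [norm_smul, hnormconj, hz, key1]
    calc ‖lam‖⁻¹ ^ (n + 1) * ‖ContinuousLinearMap.adjoint ((PE E).comp (T' ^ (n + 1))) e‖
        ≤ ‖lam‖⁻¹ ^ (n + 1) * (‖ContinuousLinearMap.adjoint ((PE E).comp (T' ^ (n + 1)))‖ * ‖e‖) := by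
          gcongr; exact le_opNorm _ _
      _ = ‖(PE E).comp (T' ^ (n + 1))‖ * ‖lam‖⁻¹ ^ (n + 1) * ‖e‖ := by
          rw [adjoint.norm_map]; ring
  have S2 : Summable (fun n : ℕ => ‖((starRingEnd ℂ lam) ^ n) • (T ^ n) e‖) := by
    apply Summable.of_nonneg_of_le (fun n => norm_nonneg _) _ (h2.mul_right ‖e‖)
    intro n
    rw [norm_smul, norm_pow, RCLike.norm_conj, key2]
    calc ‖lam‖ ^ n * ‖ContinuousLinearMap.adjoint ((PE E).comp ((ContinuousLinearMap.adjoint T) ^ n)) e‖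
        ≤ ‖lam‖ ^ n * (‖ContinuousLinearMap.adjoint ((PE E).comp ((ContinuousLinearMap.adjoint T) ^ n))‖ * ‖e‖) := by
          gcongr; exact le_opNorm _ _
      _ = ‖(PE E).comp ((ContinuousLinearMap.adjoint T) ^ n)‖ * ‖lam‖ ^ n * ‖e‖ := by
          rw [adjoint.norm_map]; ring
  have S3 : Summable (fun n : ℕ => ‖(lam ^ (-(n + 1 : ℤ))) • PE E ((T' ^ (n + 1)) g)‖) := by
    apply Summable.of_nonneg_of_le (fun n => norm_nonneg _) _ (h1.mul_right ‖g‖)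
    intro n
    rw [norm_smul, norm_zpow, hz]
    calc ‖lam‖⁻¹ ^ (n + 1) * ‖PE E ((T' ^ (n + 1)) g)‖
        ≤ ‖lam‖⁻¹ ^ (n + 1) * (‖(PE E).comp (T' ^ (n + 1))‖ * ‖g‖) := by
          gcongr; exact le_opNorm ((PE E).comp (T' ^ (n + 1))) g
      _ = ‖(PE E).comp (T' ^ (n + 1))‖ * ‖lam‖⁻¹ ^ (n + 1) * ‖g‖ := by ring
  have S4 : Summable (fun n : ℕ =>
      ‖(lam ^ n) • PE E (((ContinuousLinearMap.adjoint T) ^ n) g)‖) := by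
    apply Summable.of_nonneg_of_le (fun n => norm_nonneg _) _ (h2.mul_right ‖g‖)
    intro n
    rw [norm_smul, norm_pow]
    calc ‖lam‖ ^ n * ‖PE E (((ContinuousLinearMap.adjoint T) ^ n) g)‖
        ≤ ‖lam‖ ^ n * (‖(PE E).comp ((ContinuousLinearMap.adjoint T) ^ n)‖ * ‖g‖) := by
          gcongr; exact le_opNorm ((PE E).comp ((ContinuousLinearMap.adjoint T) ^ n)) g
      _ = ‖(PE E).comp ((ContinuousLinearMap.adjoint T) ^ n)‖ * ‖lam‖ ^ n * ‖g‖ := by ring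
  refine ⟨S1, S2, S3, S4, ?_⟩
  -- the main identity
  set a : ℕ → H := fun n => ((starRingEnd ℂ lam) ^ (-(n + 1 : ℤ))) •
    ((ContinuousLinearMap.adjoint T') ^ (n + 1)) e with ha
  set b : ℕ → H := fun n => ((starRingEnd ℂ lam) ^ n) • (T ^ n) e with hb
  set c : ℕ → H := fun n => (lam ^ (-(n + 1 : ℤ))) • PE E ((T' ^ (n + 1)) g) with hc
  set d : ℕ → H := fun n => (lam ^ n) • PE E (((ContinuousLinearMap.adjoint T) ^ n) g) with hd
  have sa : Summable a := S1.of_norm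
  have sb : Summable b := S2.of_norm
  have sc : Summable c := S3.of_norm
  have sd : Summable d := S4.of_norm
  have L1 : (inner ℂ g (∑' n, a n + ∑' n, b n) : ℂ)
      = (∑' n, (inner ℂ g (a n) : ℂ)) + ∑' n, (inner ℂ g (b n) : ℂ) := by
    calc (inner ℂ g (∑' n, a n + ∑' n, b n) : ℂ)
        = innerSL ℂ g (∑' n, a n) + innerSL ℂ g (∑' n, b n) := by
          rw [inner_add_right]; rfl
      _ = (∑' n, innerSL ℂ g (a n)) + ∑' n, innerSL ℂ g (b n) := by
          rw [(innerSL ℂ g).map_tsum sa, (innerSL ℂ g).map_tsum sb]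
      _ = (∑' n, (inner ℂ g (a n) : ℂ)) + ∑' n, (inner ℂ g (b n) : ℂ) := rfl
  have R1 : (inner ℂ (∑' n, c n + ∑' n, d n) e : ℂ)
      = (∑' n, (inner ℂ (c n) e : ℂ)) + ∑' n, (inner ℂ (d n) e : ℂ) := by
    calc (inner ℂ (∑' n, c n + ∑' n, d n) e : ℂ)
        = ((innerSL ℂ).flip e) (∑' n, c n) + ((innerSL ℂ).flip e) (∑' n, d n) := by
          rw [inner_add_left]; rfl
      _ = (∑' n, ((innerSL ℂ).flip e) (c n)) + ∑' n, ((innerSL ℂ).flip e) (d n) := by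
          rw [((innerSL ℂ).flip e).map_tsum sc, ((innerSL ℂ).flip e).map_tsum sd]
      _ = (∑' n, (inner ℂ (c n) e : ℂ)) + ∑' n, (inner ℂ (d n) e : ℂ) := rfl
  rw [L1, R1]
  congr 1
  · refine tsum_congr fun n => ?_
    rw [ha, hc]
    simp only [inner_smul_right, inner_smul_left, map_zpow₀]
    congr 1
    rw [key1, ContinuousLinearMap.adjoint_inner_right]
    rfl
  · refine tsum_congr fun n => ?_
    rw [hb, hd]
    simp only [inner_smul_right, inner_smul_left, map_pow]
    congr 1
    rw [key2, ContinuousLinearMap.adjoint_inner_right]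
    rfl
end

section
/- Assume: (a) for every x ∈ H and every λ ∈ A(r⁻,r⁺) the series Σ_{n≥1}(P_E Tⁿ x)λ^{-n} + Σ_{n≥0}(P_E T'*ⁿ x)λⁿ converges in E; (b) for every x ∈ H and every λ ∈ A(r'⁻,r'⁺) the series Σ_{n≥1}(P_E T'ⁿ x)λ^{-n} + Σ_{n≥0}(P_E T*ⁿ x)λⁿ converges in E; (c) r⁻ < 1 and r'⁻ ≤ 1 ≤ r'⁺. Let x ∈ H satisfy limsup_{n→∞} ‖P_E T'*ⁿ x‖^{1/n} = 0. Then there is an open neighbourhood W ⊆ (0,∞) of 1 such that for every r ∈ W the series Σ_{n≥1} r^{-2n} T'*ⁿ P_E Tⁿ x and Σ_{n≥0} r^{2n} Tⁿ P_E T'*ⁿ x converge absolutely in H, and lim_{r→1} ( Σ_{n≥1} r^{-2n} T'*ⁿ P_E Tⁿ x + Σ_{n≥0} r^{2n} Tⁿ P_E T'*ⁿ x ) = Σ_{n≥1} T'*ⁿ P_E Tⁿ x + Σ_{n≥0} Tⁿ P_E T'*ⁿ x. -/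
open ContinuousLinearMap

set_option linter.unusedSectionVars false
set_option linter.unusedVariables false
set_option maxHeartbeats 1000000

section aux
variable {H : Type*} [NormedAddCommGroup H] [InnerProductSpace ℂ H] [CompleteSpace H]
variable (E : Submodule ℂ H) [CompleteSpace E]

lemma PE_idem (z : H) : PE E (PE E z) = PE E z := by
  simp only [PE, ContinuousLinearMap.comp_apply, Submodule.subtypeL_apply]
  congr 1
  exact Submodule.orthogonalProjectionOnto_mem_subspace_eq_self _

lemma PE_inner (u v : H) : (inner ℂ (PE E u) v : ℂ) = inner ℂ u (PE E v) := by
  simp only [PE, ContinuousLinearMap.comp_apply, Submodule.subtypeL_apply]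
  exact Submodule.inner_starProjection_left_eq_right E u v

lemma PE_norm_le (z : H) : ‖PE E z‖ ≤ ‖z‖ := by
  have h : ‖PE E z‖ = ‖E.orthogonalProjectionOnto z‖ := rfl
  rw [h]
  calc ‖E.orthogonalProjectionOnto z‖ ≤ ‖(E.orthogonalProjectionOnto : H →L[ℂ] E)‖ * ‖z‖ :=
        (E.orthogonalProjectionOnto).le_opNorm z
    _ ≤ 1 * ‖z‖ := by
        have := Submodule.orthogonalProjectionOnto_norm_le (K := E)
        gcongr
    _ = ‖z‖ := one_mul _

lemma adjoint_on_PE (B : H →L[ℂ] H) (z : H) :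
    ‖ContinuousLinearMap.adjoint B (PE E z)‖ ≤ ‖(PE E).comp B‖ * ‖PE E z‖ := by
  set e := PE E z with he
  set w := ContinuousLinearMap.adjoint B e with hw
  have hee : PE E e = e := PE_idem E z
  have h2 : (inner ℂ w w : ℂ) = inner ℂ e (PE E (B w)) := by
    rw [hw, ContinuousLinearMap.adjoint_inner_left]
    nth_rewrite 1 [← hee]
    rw [PE_inner]
  have key : ‖w‖ ^ 2 ≤ (‖(PE E).comp B‖ * ‖e‖) * ‖w‖ := by
    have h1 : (‖w‖ : ℝ) ^ 2 = RCLike.re (inner ℂ w w : ℂ) := (inner_self_eq_norm_sq w).symm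
    rw [h1, h2]
    calc RCLike.re (inner ℂ e (PE E (B w)) : ℂ) ≤ ‖(inner ℂ e (PE E (B w)) : ℂ)‖ :=
          RCLike.re_le_norm _
      _ ≤ ‖e‖ * ‖PE E (B w)‖ := norm_inner_le_norm _ _
      _ = ‖e‖ * ‖((PE E).comp B) w‖ := by rw [ContinuousLinearMap.comp_apply]
      _ ≤ ‖e‖ * (‖(PE E).comp B‖ * ‖w‖) := by
          gcongr
          exact ((PE E).comp B).le_opNorm w
      _ = (‖(PE E).comp B‖ * ‖e‖) * ‖w‖ := by ring
  rcases eq_or_lt_of_le (norm_nonneg w) with h0 | h0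
  · rw [← h0]
    positivity
  · nlinarith [key]

lemma adjoint_pow_eq (A : H →L[ℂ] H) (k : ℕ) :
    (ContinuousLinearMap.adjoint A) ^ k = ContinuousLinearMap.adjoint (A ^ k) := by
  rw [← ContinuousLinearMap.star_eq_adjoint, ← ContinuousLinearMap.star_eq_adjoint]
  exact (star_pow A k).symm

lemma real_zpow_norm (s : ℝ) (hs : 0 < s) (k : ℤ) : ‖((s : ℂ) ^ k)‖ = s ^ k := by
  rw [norm_zpow, Complex.norm_real, Real.norm_eq_abs, abs_of_pos hs]

lemma neg_cast_zpow (s : ℝ) (n : ℕ) : s ^ (-((n : ℤ) + 1)) = (s ^ (n + 1))⁻¹ := by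
  rw [show -((n : ℤ) + 1) = -((n + 1 : ℕ) : ℤ) by push_cast; ring, zpow_neg, zpow_natCast]

lemma neg_cast_zpow2 (s : ℝ) (n : ℕ) : s ^ (-(2 * ((n : ℤ) + 1))) = (s ^ (2 * n + 2))⁻¹ := by
  rw [show -(2 * ((n : ℤ) + 1)) = -((2 * n + 2 : ℕ) : ℤ) by push_cast; ring, zpow_neg,
    zpow_natCast]

end aux

/- STATEMENT 13: Under the convergence assumptions (a), (b) on the annuli
A(r⁻,r⁺), A(r'⁻,r'⁺) and (c) r⁻ < 1, r'⁻ ≤ 1 ≤ r'⁺, if x ∈ H satisfies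
limsup ‖P_E T'*ⁿ x‖^{1/n} = 0 then there is an open neighbourhood W ⊆ (0,∞) of 1 such
that for r ∈ W the series Σ_{n≥1} r^{-2n} T'*ⁿ P_E Tⁿ x and Σ_{n≥0} r^{2n} Tⁿ P_E T'*ⁿ x
converge absolutely, and as r → 1 their sum tends to
Σ_{n≥1} T'*ⁿ P_E Tⁿ x + Σ_{n≥0} Tⁿ P_E T'*ⁿ x. -/
theorem stmt_13 {H : Type*} [NormedAddCommGroup H] [InnerProductSpace ℂ H] [CompleteSpace H]
    (T T' W : H →L[ℂ] H)
    (hleft : ∃ S : H →L[ℂ] H, S.comp T = ContinuousLinearMap.id ℂ H)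
    (hW1 : W.comp ((ContinuousLinearMap.adjoint T).comp T) = ContinuousLinearMap.id ℂ H)
    (hW2 : ((ContinuousLinearMap.adjoint T).comp T).comp W = ContinuousLinearMap.id ℂ H)
    (hT' : T' = T.comp W)
    (E : Submodule ℂ H) [CompleteSpace E]
    (rm rp rm' rp' : ℝ) (hrm : 0 ≤ rm) (hr : rm < rp) (hrm' : 0 ≤ rm') (hr' : rm' < rp')
    (ha : ∀ x : H, ∀ lam ∈ annulus rm rp,
      Summable (fun n : ℕ => (lam ^ (-(n + 1 : ℤ))) • PE E ((T ^ (n + 1)) x)) ∧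
      Summable (fun n : ℕ =>
        (lam ^ n) • PE E (((ContinuousLinearMap.adjoint T') ^ n) x)))
    (hb : ∀ x : H, ∀ lam ∈ annulus rm' rp',
      Summable (fun n : ℕ => (lam ^ (-(n + 1 : ℤ))) • PE E ((T' ^ (n + 1)) x)) ∧
      Summable (fun n : ℕ =>
        (lam ^ n) • PE E (((ContinuousLinearMap.adjoint T) ^ n) x)))
    (hc1 : rm < 1) (hc2 : rm' ≤ 1) (hc3 : 1 ≤ rp')
    (x : H)
    (hx : Filter.limsup
      (fun n : ℕ => ‖PE E (((ContinuousLinearMap.adjoint T') ^ n) x)‖ ^ (1 / (n : ℝ)))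
      Filter.atTop = 0) :
    ∃ Wnbhd : Set ℝ, IsOpen Wnbhd ∧ (1 : ℝ) ∈ Wnbhd ∧ Wnbhd ⊆ Set.Ioi (0 : ℝ) ∧
      (∀ r ∈ Wnbhd,
        Summable (fun n : ℕ =>
          ‖((r : ℂ) ^ (-(2 * (n + 1) : ℤ))) •
            ((ContinuousLinearMap.adjoint T') ^ (n + 1)) (PE E ((T ^ (n + 1)) x))‖) ∧
        Summable (fun n : ℕ =>
          ‖((r : ℂ) ^ (2 * n)) •
            (T ^ n) (PE E (((ContinuousLinearMap.adjoint T') ^ n) x))‖)) ∧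
      Filter.Tendsto
        (fun r : ℝ =>
          (∑' n : ℕ, ((r : ℂ) ^ (-(2 * (n + 1) : ℤ))) •
              ((ContinuousLinearMap.adjoint T') ^ (n + 1)) (PE E ((T ^ (n + 1)) x))) +
            ∑' n : ℕ, ((r : ℂ) ^ (2 * n)) •
              (T ^ n) (PE E (((ContinuousLinearMap.adjoint T') ^ n) x)))
        (nhdsWithin 1 Wnbhd)
        (nhds ((∑' n : ℕ,
            ((ContinuousLinearMap.adjoint T') ^ (n + 1)) (PE E ((T ^ (n + 1)) x))) +
          ∑' n : ℕ, (T ^ n) (PE E (((ContinuousLinearMap.adjoint T') ^ n) x)))) := by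
  classical
  -- abbreviations for the two sequences of vectors
  set A : ℕ → H := fun n => ((ContinuousLinearMap.adjoint T') ^ (n + 1)) (PE E ((T ^ (n + 1)) x))
    with hA
  set B : ℕ → H := fun n => (T ^ n) (PE E (((ContinuousLinearMap.adjoint T') ^ n) x)) with hB
  -- choice of σ
  set σ : ℝ := (rm + min rp 1) / 2 with hσ
  have hmin : rm < min rp 1 := lt_min hr hc1
  have hσ1 : rm < σ := by simp only [hσ]; linarith
  have hσ2 : σ < min rp 1 := by simp only [hσ]; linarith
  have hσrp : σ < rp := lt_of_lt_of_le hσ2 (min_le_left _ _)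
  have hσlt1 : σ < 1 := lt_of_lt_of_le hσ2 (min_le_right _ _)
  have hσ0 : 0 < σ := by
    have : (0 : ℝ) < min rp 1 := lt_of_le_of_lt hrm hmin
    simp only [hσ]; linarith
  -- choice of ρ
  set ρ : ℝ := (rm' + min rp' σ⁻¹) / 2 with hρ
  have hσinv : 1 < σ⁻¹ := (one_lt_inv₀ hσ0).mpr hσlt1
  have hmin' : rm' < min rp' σ⁻¹ := lt_min hr' (lt_of_le_of_lt hc2 hσinv)
  have hρ1 : rm' < ρ := by simp only [hρ]; linarith
  have hρ2 : ρ < min rp' σ⁻¹ := by simp only [hρ]; linarith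
  have hρrp : ρ < rp' := lt_of_lt_of_le hρ2 (min_le_left _ _)
  have hρσ : ρ < σ⁻¹ := lt_of_lt_of_le hρ2 (min_le_right _ _)
  have hρ0 : 0 < ρ := by
    have : (0 : ℝ) < min rp' σ⁻¹ := lt_of_le_of_lt hrm' hmin'
    simp only [hρ]; linarith
  -- q
  set q : ℝ := σ * ρ with hq
  have hq0 : 0 < q := mul_pos hσ0 hρ0
  have hq1 : q < 1 := by
    have := (mul_lt_mul_iff_right₀ hσ0).mpr hρσ
    rwa [mul_inv_cancel₀ (ne_of_gt hσ0)] at this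
  -- bound ‖PE (T^{n+1} x)‖ ≤ C₁ σ^{n+1}
  have hσmem : (σ : ℂ) ∈ annulus rm rp := by
    constructor <;> rw [Complex.norm_real, Real.norm_eq_abs, abs_of_pos hσ0] <;> assumption
  obtain ⟨C₁, hC₁⟩ : ∃ C₁ : ℝ, ∀ n : ℕ,
      ‖((σ : ℂ) ^ (-((n : ℤ) + 1))) • PE E ((T ^ (n + 1)) x)‖ ≤ C₁ := by
    have hs := (ha x _ hσmem).1
    have ht := hs.tendsto_atTop_zero.norm
    obtain ⟨C, hC⟩ := ht.bddAbove_range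
    exact ⟨C, fun n => hC ⟨n, rfl⟩⟩
  have hC₁0 : 0 ≤ C₁ := le_trans (norm_nonneg _) (hC₁ 0)
  have hPE_T : ∀ n : ℕ, ‖PE E ((T ^ (n + 1)) x)‖ ≤ C₁ * σ ^ (n + 1) := by
    intro n
    have h := hC₁ n
    rw [norm_smul, real_zpow_norm σ hσ0, neg_cast_zpow σ n] at h
    have hp : (0 : ℝ) < σ ^ (n + 1) := pow_pos hσ0 _
    calc ‖PE E ((T ^ (n + 1)) x)‖
        = σ ^ (n + 1) * ((σ ^ (n + 1))⁻¹ * ‖PE E ((T ^ (n + 1)) x)‖) := by field_simp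
      _ ≤ σ ^ (n + 1) * C₁ := by gcongr
      _ = C₁ * σ ^ (n + 1) := by ring
  -- Banach–Steinhaus bound : ‖PE ∘ T'^{n+1}‖ ≤ C₂ ρ^{n+1}
  have hρmem : (ρ : ℂ) ∈ annulus rm' rp' := by
    constructor <;> rw [Complex.norm_real, Real.norm_eq_abs, abs_of_pos hρ0] <;> assumption
  set g : ℕ → H →L[ℂ] H :=
    fun n => ((ρ : ℂ) ^ (-((n : ℤ) + 1))) • ((PE E).comp (T' ^ (n + 1))) with hg
  obtain ⟨C₂, hC₂⟩ : ∃ C₂ : ℝ, ∀ n : ℕ, ‖g n‖ ≤ C₂ := by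
    apply banach_steinhaus
    intro y
    have hs := (hb y _ hρmem).1
    have ht := hs.tendsto_atTop_zero.norm
    obtain ⟨C, hC⟩ := ht.bddAbove_range
    refine ⟨C, fun n => ?_⟩
    have := hC ⟨n, rfl⟩
    simpa only [hg, ContinuousLinearMap.smul_apply, ContinuousLinearMap.comp_apply] using this
  have hC₂0 : 0 ≤ C₂ := le_trans (norm_nonneg _) (hC₂ 0)
  have hPET' : ∀ n : ℕ, ‖(PE E).comp (T' ^ (n + 1))‖ ≤ C₂ * ρ ^ (n + 1) := by
    intro n
    have h := hC₂ n
    rw [hg, norm_smul, real_zpow_norm ρ hρ0, neg_cast_zpow ρ n] at h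
    have hp : (0 : ℝ) < ρ ^ (n + 1) := pow_pos hρ0 _
    calc ‖(PE E).comp (T' ^ (n + 1))‖
        = ρ ^ (n + 1) * ((ρ ^ (n + 1))⁻¹ * ‖(PE E).comp (T' ^ (n + 1))‖) := by field_simp
      _ ≤ ρ ^ (n + 1) * C₂ := by gcongr
      _ = C₂ * ρ ^ (n + 1) := by ring
  -- bound on A n
  set D : ℝ := C₂ * C₁ with hD
  have hD0 : 0 ≤ D := mul_nonneg hC₂0 hC₁0
  have hAbound : ∀ n : ℕ, ‖A n‖ ≤ D * q ^ (n + 1) := by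
    intro n
    have h1 : ‖A n‖ ≤ ‖(PE E).comp (T' ^ (n + 1))‖ * ‖PE E ((T ^ (n + 1)) x)‖ := by
      rw [hA]
      simp only []
      rw [adjoint_pow_eq]
      exact adjoint_on_PE E (T' ^ (n + 1)) _
    calc ‖A n‖ ≤ ‖(PE E).comp (T' ^ (n + 1))‖ * ‖PE E ((T ^ (n + 1)) x)‖ := h1
      _ ≤ (C₂ * ρ ^ (n + 1)) * (C₁ * σ ^ (n + 1)) :=
          mul_le_mul (hPET' n) (hPE_T n) (norm_nonneg _) (by positivity)
      _ = D * q ^ (n + 1) := by rw [hD, hq, mul_pow]; ring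
  -- bound on second sequence from the limsup hypothesis
  set M : ℝ := max ‖T‖ 1 with hM
  have hM1 : (1 : ℝ) ≤ M := le_max_right _ _
  have hM0 : (0 : ℝ) < M := lt_of_lt_of_le one_pos hM1
  set η : ℝ := (2 * M)⁻¹ with hη
  have hη0 : 0 < η := by positivity
  have hMη : M * η = 1 / 2 := by rw [hη]; field_simp
  -- the limsup sequence is bounded above
  set u : ℕ → ℝ :=
    fun n => ‖PE E (((ContinuousLinearMap.adjoint T') ^ n) x)‖ ^ (1 / (n : ℝ)) with hu
  have hubdd : Filter.IsBoundedUnder (· ≤ ·) Filter.atTop u := by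
    set K : ℝ := max ‖ContinuousLinearMap.adjoint T'‖ 1 with hK
    set Dx : ℝ := max 1 ‖x‖ with hDx
    have hK1 : (1 : ℝ) ≤ K := le_max_right _ _
    have hDx1 : (1 : ℝ) ≤ Dx := le_max_left _ _
    have hc : (1 : ℝ) ≤ K * Dx := one_le_mul_of_one_le_of_one_le hK1 hDx1
    refine ⟨K * Dx, ?_⟩
    rw [Filter.eventually_map]
    filter_upwards [Filter.eventually_ge_atTop 1] with n hn
    have hbase : ‖PE E (((ContinuousLinearMap.adjoint T') ^ n) x)‖ ≤ (K * Dx) ^ n := by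
      calc ‖PE E (((ContinuousLinearMap.adjoint T') ^ n) x)‖
          ≤ ‖((ContinuousLinearMap.adjoint T') ^ n) x‖ := PE_norm_le E _
        _ ≤ ‖(ContinuousLinearMap.adjoint T') ^ n‖ * ‖x‖ := le_opNorm _ _
        _ ≤ ‖ContinuousLinearMap.adjoint T'‖ ^ n * ‖x‖ := by
            gcongr
            exact norm_pow_le' _ (lt_of_lt_of_le one_pos hn)
        _ ≤ K ^ n * Dx ^ n := by
            have h1 : ‖ContinuousLinearMap.adjoint T'‖ ^ n ≤ K ^ n :=
              pow_le_pow_left₀ (norm_nonneg _) (le_max_left _ _) n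
            have h2 : ‖x‖ ≤ Dx ^ n := by
              calc ‖x‖ ≤ Dx := le_max_right _ _
                _ = Dx ^ 1 := (pow_one _).symm
                _ ≤ Dx ^ n := pow_le_pow_right₀ (le_trans le_rfl hDx1) hn
            exact mul_le_mul h1 h2 (norm_nonneg _) (by positivity)
        _ = (K * Dx) ^ n := (mul_pow _ _ _).symm
    have hexp : (0 : ℝ) ≤ 1 / (n : ℝ) := by positivity
    calc u n ≤ ((K * Dx) ^ n) ^ (1 / (n : ℝ)) :=
          Real.rpow_le_rpow (norm_nonneg _) hbase hexp
      _ = K * Dx := by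
          have hn0 : ((n : ℝ)) ≠ 0 := by
            have : (1 : ℝ) ≤ (n : ℝ) := by exact_mod_cast hn
            linarith
          rw [← Real.rpow_natCast (K * Dx) n, ← Real.rpow_mul (by linarith), mul_one_div,
            div_self hn0, Real.rpow_one]

  -- eventual bound from the limsup hypothesis
  have hlt : ∀ᶠ n in Filter.atTop, u n < η :=
    Filter.eventually_lt_of_limsup_lt (by rw [hx]; exact hη0) hubdd
  obtain ⟨N₀, hN₀⟩ := Filter.eventually_atTop.mp (hlt.and (Filter.eventually_ge_atTop 1))
  have hPEbound : ∀ n, N₀ ≤ n →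
      ‖PE E (((ContinuousLinearMap.adjoint T') ^ n) x)‖ ≤ η ^ n := by
    intro n hn
    obtain ⟨h1, h2⟩ := hN₀ n hn
    have hn0 : ((n : ℝ)) ≠ 0 := by
      have : (1 : ℝ) ≤ (n : ℝ) := by exact_mod_cast h2
      linarith
    have heq : (u n) ^ n = ‖PE E (((ContinuousLinearMap.adjoint T') ^ n) x)‖ := by
      simp only [hu]
      rw [← Real.rpow_natCast
          (‖PE E (((ContinuousLinearMap.adjoint T') ^ n) x)‖ ^ (1 / (n : ℝ))) n,
        ← Real.rpow_mul (norm_nonneg _), one_div, inv_mul_cancel₀ hn0, Real.rpow_one]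
    have hun : 0 ≤ u n := by simp only [hu]; positivity
    calc ‖PE E (((ContinuousLinearMap.adjoint T') ^ n) x)‖ = (u n) ^ n := heq.symm
      _ ≤ η ^ n := pow_le_pow_left₀ hun h1.le n
  -- norm bound for powers of T
  have hTpow : ∀ (n : ℕ) (z : H), ‖(T ^ n) z‖ ≤ M ^ n * ‖z‖ := by
    intro n
    induction n with
    | zero => intro z; simp
    | succ k ih =>
      intro z
      have hz : (T ^ (k + 1)) z = (T ^ k) (T z) := by rw [pow_succ]; rfl
      rw [hz]
      calc ‖(T ^ k) (T z)‖ ≤ M ^ k * ‖T z‖ := ih (T z)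
        _ ≤ M ^ k * (M * ‖z‖) := by
            have h1 : ‖T z‖ ≤ M * ‖z‖ :=
              le_trans (T.le_opNorm z)
                (mul_le_mul (le_max_left _ _) le_rfl (norm_nonneg _) (by positivity))
            exact mul_le_mul_of_nonneg_left h1 (by positivity)
        _ = M ^ (k + 1) * ‖z‖ := by ring
  -- bound on B n and summability of the dominating series for the second sum
  have hBbound : ∀ k : ℕ, N₀ ≤ k → (6/5 : ℝ) ^ (2 * k) * ‖B k‖ ≤ (18/25 : ℝ) ^ k := by
    intro k hk
    have h1 : ‖B k‖ ≤ M ^ k * η ^ k := by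
      calc ‖B k‖ ≤ M ^ k * ‖PE E (((ContinuousLinearMap.adjoint T') ^ k) x)‖ := hTpow k _
        _ ≤ M ^ k * η ^ k :=
            mul_le_mul_of_nonneg_left (hPEbound k hk) (by positivity)
    have h2 : (6/5 : ℝ) ^ (2 * k) = (36/25 : ℝ) ^ k := by
      rw [pow_mul]; norm_num
    calc (6/5 : ℝ) ^ (2 * k) * ‖B k‖ ≤ (36/25 : ℝ) ^ k * (M ^ k * η ^ k) := by
          rw [h2]
          exact mul_le_mul_of_nonneg_left h1 (by positivity)
      _ = ((36/25 : ℝ) * (M * η)) ^ k := by rw [mul_pow, mul_pow]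
      _ = (18/25 : ℝ) ^ k := by rw [hMη]; norm_num
  have hS2 : Summable (fun n : ℕ => (6/5 : ℝ) ^ (2 * n) * ‖B n‖) := by
    rw [← summable_nat_add_iff N₀]
    have hgeo : Summable (fun n : ℕ => (18/25 : ℝ) ^ (n + N₀)) := by
      simpa [pow_add] using
        (summable_geometric_of_lt_one (by norm_num : (0:ℝ) ≤ 18/25)
          (by norm_num : (18/25 : ℝ) < 1)).mul_right ((18/25 : ℝ) ^ N₀)
    exact Summable.of_nonneg_of_le (fun n => by positivity)
      (fun n => hBbound (n + N₀) (Nat.le_add_left _ _)) hgeo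
  -- the neighbourhood
  set a : ℝ := Real.sqrt ((1 + q) / 2) with haa
  have ha2 : a ^ 2 = (1 + q) / 2 := Real.sq_sqrt (by linarith)
  have ha0 : 0 < a := Real.sqrt_pos.mpr (by linarith)
  have ha1 : a < 1 := by nlinarith [ha2, ha0]
  have haq : q < a ^ 2 := by rw [ha2]; linarith
  set t : ℝ := q / a ^ 2 with ht
  have ht0 : 0 ≤ t := by positivity
  have ht1 : t < 1 := (div_lt_one (by positivity)).mpr haq
  have hbound1 : ∀ r ∈ Set.Ioo a (6/5 : ℝ), ∀ n : ℕ,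
      ‖((r : ℂ) ^ (-(2 * (n + 1) : ℤ))) • A n‖ ≤ D * t ^ (n + 1) := by
    intro r hr n
    have hr0 : 0 < r := lt_trans ha0 hr.1
    rw [norm_smul, real_zpow_norm r hr0, neg_cast_zpow2 r n]
    have h1 : (r ^ (2 * n + 2))⁻¹ ≤ (a ^ (2 * n + 2))⁻¹ :=
      inv_anti₀ (pow_pos ha0 _) (pow_le_pow_left₀ ha0.le hr.1.le _)
    calc (r ^ (2 * n + 2))⁻¹ * ‖A n‖ ≤ (a ^ (2 * n + 2))⁻¹ * (D * q ^ (n + 1)) :=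
          mul_le_mul h1 (hAbound n) (norm_nonneg _) (by positivity)
      _ = D * t ^ (n + 1) := by
          rw [ht, div_pow, show 2 * n + 2 = 2 * (n + 1) by ring, pow_mul]
          have hane : (a ^ 2 : ℝ) ≠ 0 := by positivity
          field_simp
  have hsum1 : Summable (fun n : ℕ => D * t ^ (n + 1)) := by
    refine ((summable_geometric_of_lt_one ht0 ht1).mul_left (D * t)).congr fun n => ?_
    rw [pow_succ]; ring
  have hbound2 : ∀ r ∈ Set.Ioo a (6/5 : ℝ), ∀ n : ℕ,
      ‖((r : ℂ) ^ (2 * n)) • B n‖ ≤ (6/5 : ℝ) ^ (2 * n) * ‖B n‖ := by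
    intro r hr n
    have hr0 : 0 < r := lt_trans ha0 hr.1
    rw [norm_smul, norm_pow, Complex.norm_real, Real.norm_eq_abs, abs_of_pos hr0]
    exact mul_le_mul (pow_le_pow_left₀ hr0.le hr.2.le _) le_rfl (norm_nonneg _) (by positivity)
  refine ⟨Set.Ioo a (6/5), isOpen_Ioo, ⟨ha1, by norm_num⟩,
    fun r hr => lt_trans ha0 hr.1, fun r hr => ?_, ?_⟩
  · exact ⟨Summable.of_nonneg_of_le (fun n => norm_nonneg _) (hbound1 r hr) hsum1,
      Summable.of_nonneg_of_le (fun n => norm_nonneg _) (hbound2 r hr) hS2⟩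
  · -- continuity of the sums on the interval, hence the limit
    have hcont1 : ContinuousOn
        (fun r : ℝ => ∑' n : ℕ, ((r : ℂ) ^ (-(2 * (n + 1) : ℤ))) • A n) (Set.Ioo a (6/5)) := by
      refine continuousOn_tsum (fun n => ?_) hsum1 (fun n r hr => hbound1 r hr n)
      refine ContinuousOn.smul ?_ continuousOn_const
      refine ContinuousOn.zpow₀ (Complex.continuous_ofReal.continuousOn) _ (fun r hr => ?_)
      exact Or.inl (by
        simp only [ne_eq, Complex.ofReal_eq_zero]
        exact (lt_trans ha0 hr.1).ne')
    have hcont2 : ContinuousOn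
        (fun r : ℝ => ∑' n : ℕ, ((r : ℂ) ^ (2 * n)) • B n) (Set.Ioo a (6/5)) := by
      refine continuousOn_tsum (fun n => ?_) hS2 (fun n r hr => hbound2 r hr n)
      exact ((Complex.continuous_ofReal.pow _).smul continuous_const).continuousOn
    have h1W : (1 : ℝ) ∈ Set.Ioo a (6/5 : ℝ) := ⟨ha1, by norm_num⟩
    have htend := (hcont1.add hcont2) 1 h1W
    have hval : ((∑' n : ℕ, (((1:ℝ) : ℂ) ^ (-(2 * (n + 1) : ℤ))) • A n) +
        ∑' n : ℕ, (((1:ℝ) : ℂ) ^ (2 * n)) • B n) = (∑' n : ℕ, A n) + ∑' n : ℕ, B n := by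
      congr 1
      · exact tsum_congr fun n => by
          simp only [Complex.ofReal_one, one_zpow, one_smul]
      · exact tsum_congr fun n => by
          simp only [Complex.ofReal_one, one_pow, one_smul]
    rw [← hval]
    exact htend
end

section
/- Let X be a countable set, φ : X → X a self-map and w : X → ℂ, and suppose that the weighted composition operator C_{φ,w} is a bounded, left-invertible operator on ℓ²(X). Then its Cauchy dual C_{φ,w}' := C_{φ,w}(C_{φ,w}* C_{φ,w})⁻¹ is again a weighted composition operator with the same symbol φ and with weight w' : X → ℂ given by w'(x) := w(x) / (Σ_{y ∈ φ⁻¹(φ(x))} |w(y)|²); that is, C_{φ,w}' f = w'·(f∘φ) for every f ∈ ℓ²(X). -/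
open ContinuousLinearMap

/- STATEMENT 18: If the weighted composition operator C_{φ,w} (acting on ℓ²(X) by
C_{φ,w} f = w·(f∘φ)) is bounded and left-invertible, then its Cauchy dual
C' := C (C*C)⁻¹ is the weighted composition operator with the same symbol φ and
weight w'(x) = w(x) / (Σ_{y ∈ φ⁻¹(φ(x))} |w(y)|²). -/
private lemma keyA_stmt18 {X : Type*} (φ : X → X) (w : X → ℂ)
    (Cw : lp (fun _ : X => ℂ) 2 →L[ℂ] lp (fun _ : X => ℂ) 2)
    (hCw : ∀ (f : lp (fun _ : X => ℂ) 2) (x : X), Cw f x = w x * f (φ x))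
    (g : lp (fun _ : X => ℂ) 2) (x : X) :
    ((ContinuousLinearMap.adjoint Cw) (Cw g)) x
      = ((∑' y : {y : X // φ y = x}, ‖w y.1‖ ^ 2 : ℝ) : ℂ) * g x := by
  classical
  set s : lp (fun _ : X => ℂ) 2 := lp.single 2 x (1 : ℂ) with hs
  have h1 : ((ContinuousLinearMap.adjoint Cw) (Cw g)) x
      = inner (𝕜 := ℂ) s ((ContinuousLinearMap.adjoint Cw) (Cw g)) := by
    rw [lp.inner_single_left]; simp
  rw [h1, ContinuousLinearMap.adjoint_inner_right, lp.inner_eq_tsum]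
  have hsv : ∀ j : X, (s : ∀ _ : X, ℂ) j = if j = x then 1 else 0 := by
    intro j
    rw [hs, lp.single_apply]
    split_ifs with hj <;> simp [hj]
  have h2 : ∀ y : X, inner (𝕜 := ℂ) ((Cw s) y) ((Cw g) y)
      = Set.indicator {y : X | φ y = x} (fun y => ((‖w y‖ ^ 2 : ℝ) : ℂ) * g x) y := by
    intro y
    rw [hCw, hCw, hsv (φ y)]
    by_cases hy : φ y = x
    · rw [Set.indicator_of_mem (by exact hy : y ∈ {y : X | φ y = x})]
      simp only [hy, if_true, mul_one, RCLike.inner_apply]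
      rw [mul_right_comm, RCLike.mul_conj]; push_cast
      norm_cast
    · simp [hy, Set.indicator_of_notMem (by exact hy : y ∉ {y : X | φ y = x})]
  calc ∑' y : X, inner (𝕜 := ℂ) ((Cw s) y) ((Cw g) y)
      = ∑' y : X, Set.indicator {y : X | φ y = x} (fun y => ((‖w y‖ ^ 2 : ℝ) : ℂ) * g x) y :=
        tsum_congr h2
    _ = ∑' y : {y : X | φ y = x}, ((‖w y.1‖ ^ 2 : ℝ) : ℂ) * g x := (tsum_subtype _ _).symm
    _ = (∑' y : {y : X // φ y = x}, ((‖w y.1‖ ^ 2 : ℝ) : ℂ)) * g x := tsum_mul_right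
    _ = ((∑' y : {y : X // φ y = x}, ‖w y.1‖ ^ 2 : ℝ) : ℂ) * g x := by
        rw [Complex.ofReal_tsum]

theorem stmt_18 {X : Type*} [Countable X] (φ : X → X) (w : X → ℂ)
    (Cw Cw' W : lp (fun _ : X => ℂ) 2 →L[ℂ] lp (fun _ : X => ℂ) 2)
    (hCw : ∀ (f : lp (fun _ : X => ℂ) 2) (x : X), Cw f x = w x * f (φ x))
    (hleft : ∃ L : lp (fun _ : X => ℂ) 2 →L[ℂ] lp (fun _ : X => ℂ) 2,
      L.comp Cw = ContinuousLinearMap.id ℂ _)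
    (hW1 : W.comp ((ContinuousLinearMap.adjoint Cw).comp Cw) =
      ContinuousLinearMap.id ℂ _)
    (hW2 : ((ContinuousLinearMap.adjoint Cw).comp Cw).comp W =
      ContinuousLinearMap.id ℂ _)
    (hCw' : Cw' = Cw.comp W) :
    ∀ (f : lp (fun _ : X => ℂ) 2) (x : X),
      Cw' f x =
        (w x / ((∑' y : {y : X // φ y = φ x}, ‖w y.1‖ ^ 2 : ℝ) : ℂ)) * f (φ x) := by
  classical
  intro f x
  set c : ℂ := ((∑' y : {y : X // φ y = φ x}, ‖w y.1‖ ^ 2 : ℝ) : ℂ) with hc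
  -- nonvanishing of c
  have hne : c ≠ 0 := by
    set x' := φ x with hx'
    set s : lp (fun _ : X => ℂ) 2 := lp.single 2 x' (1 : ℂ) with hs
    have hA : ((ContinuousLinearMap.adjoint Cw).comp Cw) s = c • s := by
      apply lp.ext
      funext z
      rw [ContinuousLinearMap.comp_apply]
      have hk := keyA_stmt18 φ w Cw hCw s z
      rw [hk, lp.coeFn_smul, Pi.smul_apply]
      have hsv : (s : ∀ _ : X, ℂ) z = if z = x' then 1 else 0 := by
        rw [hs, lp.single_apply]; split_ifs with hj <;> simp [hj]
      rw [hsv]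
      by_cases hz : z = x'
      · rw [if_pos hz, mul_one, smul_eq_mul, mul_one, hc, hz]
      · simp [hz]
    have hWs : W (((ContinuousLinearMap.adjoint Cw).comp Cw) s) = s :=
      congrFun (congrArg (DFunLike.coe) hW1) s
    rw [hA, map_smul] at hWs
    intro hzero
    rw [hzero, zero_smul] at hWs
    have h1 : (s : ∀ _ : X, ℂ) x' = 0 := by rw [← hWs]; simp
    rw [hs, lp.single_apply_self] at h1
    exact one_ne_zero h1
  have hAW : (ContinuousLinearMap.adjoint Cw) (Cw (W f)) = f := by
    have := congrFun (congrArg (DFunLike.coe) hW2) f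
    simpa using this
  have hk := keyA_stmt18 φ w Cw hCw (W f) (φ x)
  rw [hAW, ← hc] at hk
  -- hk : f (φ x) = c * (W f) (φ x)
  have hWfx : (W f : ∀ _ : X, ℂ) (φ x) = f (φ x) / c := by
    rw [eq_div_iff hne, mul_comm, ← hk]
  rw [hCw', ContinuousLinearMap.comp_apply, hCw, hWfx]
  ring
end
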